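/- The following statements are equivalent: (i) for every (c,s) ∈ X*×ℝ with inf(RLIP_c) > −∞, the assertions (α) and (β) are equivalent, where (α): every x ∈ X with ⟨x*,x⟩ ≤ r for all (x*,r) ∈ 𝒱 satisfies ⟨c,x⟩ ≥ s, and (β): there exist (x̄*, r̄) ∈ 𝒱 and λ̄ ≥ 0 with λ̄x̄* = −c and λ̄r̄ ≤ −s; (ii) cone 𝒱 + ℝ₊(0_{X*},1) is a convex and closed subset of X*×ℝ (weak*-topology on X* times the usual topology on ℝ). -/

import Mathlib

open Pointwise Topology Filter

variable {X : Type*} [AddCommGroup X] [Module ℝ X] [TopologicalSpace X]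
  [IsTopologicalAddGroup X] [ContinuousSMul ℝ X] [LocallyConvexSpace ℝ X] [T2Space X]
  {T : Type*}

/-- The cone generated by a set `A`: `cone A = {λa : λ ≥ 0, a ∈ A}`. -/
def coneSet {E : Type*} [SMul ℝ E] (A : Set E) : Set E :=
  {p | ∃ l : ℝ, 0 ≤ l ∧ ∃ a ∈ A, p = l • a}

/-- The optimal value of the robust primal problem (RLIP_c). -/
noncomputable def infRLIP (U : T → Set (WeakDual ℝ X × ℝ)) (c : WeakDual ℝ X) : EReal :=
  ⨅ x : {x : X | ∀ t, ∀ v ∈ U t, v.1 x ≤ v.2}, ((c x.1 : ℝ) : EReal)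

section Aux

variable (U : T → Set (WeakDual ℝ X × ℝ))

/-- Evaluation at a point, as a linear functional on the weak dual. -/
noncomputable def evalLM (x : X) : WeakDual ℝ X →ₗ[ℝ] ℝ where
  toFun w := w x
  map_add' := fun _ _ => rfl
  map_smul' := fun _ _ => rfl

/-- Every continuous linear functional on the weak-* dual is an evaluation. -/
theorem weakdual_dual_eval (g : WeakDual ℝ X →L[ℝ] ℝ) :
    ∃ x₀ : X, ∀ w : WeakDual ℝ X, g w = w x₀ := by
  classical
  have hBinj : Function.Injective (topDualPairing ℝ X) := by
    intro a b h
    ext x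
    exact LinearMap.congr_fun h x
  have hemb := WeakBilin.isEmbedding (B := topDualPairing ℝ X) hBinj
  have hnh : 𝓝 (0 : WeakDual ℝ X) =
      Filter.comap (fun (w : WeakDual ℝ X) (x : X) => topDualPairing ℝ X w x)
        (𝓝 fun x : X => topDualPairing ℝ X (0 : WeakDual ℝ X) x) :=
    hemb.toIsInducing.nhds_eq_comap 0
  have h0 : (fun x : X => topDualPairing ℝ X (0 : WeakDual ℝ X) x) = (0 : X → ℝ) := by
    funext x; rfl
  have hmem : g ⁻¹' Set.Ioo (-1 : ℝ) 1 ∈ 𝓝 (0 : WeakDual ℝ X) := by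
    apply g.continuous.continuousAt.preimage_mem_nhds
    rw [map_zero]
    exact isOpen_Ioo.mem_nhds (by norm_num)
  rw [hnh, h0] at hmem
  obtain ⟨t, ht, hts⟩ := Filter.mem_comap.1 hmem
  rw [nhds_pi] at ht
  obtain ⟨I, hIfin, t', ht', hsub⟩ := Filter.mem_pi.1 ht
  -- any functional vanishing on I is killed by g
  have key : ∀ w : WeakDual ℝ X, (∀ x ∈ I, w x = 0) → g w = 0 := by
    intro w hw
    by_contra hgw
    have hmemc : ∀ c : ℝ, c • w ∈ g ⁻¹' Set.Ioo (-1 : ℝ) 1 := by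
      intro c
      apply hts
      show (fun x : X => topDualPairing ℝ X (c • w) x) ∈ t
      apply hsub
      intro x hx
      show topDualPairing ℝ X (c • w) x ∈ t' x
      have hcw : topDualPairing ℝ X (c • w) x = c * w x := by
        rfl
      rw [hcw, hw x hx, mul_zero]
      exact mem_of_mem_nhds (ht' x)
    have h2 := hmemc (2 / g w)
    have : g ((2 / g w) • w) = 2 := by
      rw [map_smul, smul_eq_mul, div_mul_cancel₀ _ hgw]
    rw [Set.mem_preimage, this] at h2
    have := h2.2
    norm_num at this
  haveI : Finite ↥I := hIfin.to_subtype
  haveI : Fintype ↥I := Fintype.ofFinite ↥I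
  have hker : (⨅ i : ↥I, LinearMap.ker (evalLM (X := X) (i : X))) ≤
      LinearMap.ker (g : WeakDual ℝ X →L[ℝ] ℝ).toLinearMap := by
    intro w hw
    rw [Submodule.mem_iInf] at hw
    exact key w fun x hx => hw ⟨x, hx⟩
  have hspan := mem_span_of_iInf_ker_le_ker (𝕜 := ℝ)
    (L := fun i : ↥I => evalLM (X := X) (i : X)) hker
  obtain ⟨c, hc⟩ := (Submodule.mem_span_range_iff_exists_fun ℝ).1 hspan
  refine ⟨∑ i : ↥I, c i • (i : X), fun w => ?_⟩
  have hgw : g w = ∑ i : ↥I, c i * w (i : X) := by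
    have h := LinearMap.congr_fun hc w
    simp only [LinearMap.coe_sum, Finset.sum_apply, LinearMap.smul_apply,
      ContinuousLinearMap.coe_coe] at h
    rw [← h]
    simp [evalLM, smul_eq_mul]
    rfl
  rw [hgw, map_sum]
  congr 1
  funext i
  rw [map_smul, smul_eq_mul]

/-- The set `M` of pairs `(w,ρ)` with `w x ≤ ρ` on all robust feasible `x`. -/
def Mset : Set (WeakDual ℝ X × ℝ) :=
  {p | ∀ x : X, (∀ t, ∀ v ∈ U t, v.1 x ≤ v.2) → p.1 x ≤ p.2}

/-- The cone `K = cone 𝒱 + ℝ₊(0,1)`. -/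
def Kset : Set (WeakDual ℝ X × ℝ) :=
  coneSet (⋃ t, U t) + {p : WeakDual ℝ X × ℝ | p.1 = 0 ∧ 0 ≤ p.2}

theorem Kset_subset_Mset : Kset U ⊆ Mset U := by
  rintro p ⟨a, ⟨l, hl, v, hv, rfl⟩, b, ⟨hb1, hb2⟩, rfl⟩
  intro x hx
  obtain ⟨t, hvt⟩ := Set.mem_iUnion.1 hv
  have hvx : v.1 x ≤ v.2 := hx t v hvt
  have h1 : (l • v + b).1 x = l * v.1 x + b.1 x := rfl
  have h2 : (l • v + b).2 = l * v.2 + b.2 := rfl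
  have hb0 : b.1 x = 0 := by rw [hb1]; rfl
  rw [h1, h2, hb0]
  have : l * v.1 x ≤ l * v.2 := mul_le_mul_of_nonneg_left hvx hl
  linarith

theorem Mset_convex : Convex ℝ (Mset U) := by
  intro p hp q hq a b ha hb hab
  intro x hx
  have hpx := hp x hx
  have hqx := hq x hx
  have h1 : (a • p + b • q).1 x = a * p.1 x + b * q.1 x := rfl
  have h2 : (a • p + b • q).2 = a * p.2 + b * q.2 := rfl
  rw [h1, h2]
  have := mul_le_mul_of_nonneg_left hpx ha
  have := mul_le_mul_of_nonneg_left hqx hb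
  linarith

theorem Mset_closed : IsClosed (Mset U) := by
  have : Mset U = ⋂ x ∈ {x : X | ∀ t, ∀ v ∈ U t, v.1 x ≤ v.2},
      {p : WeakDual ℝ X × ℝ | p.1 x ≤ p.2} := by
    ext p
    simp only [Mset, Set.mem_setOf_eq, Set.mem_iInter]
  rw [this]
  apply isClosed_biInter
  intro x _
  have hcont : Continuous fun p : WeakDual ℝ X × ℝ => p.1 x :=
    (WeakBilin.eval_continuous (topDualPairing ℝ X) x).comp continuous_fst
  exact isClosed_le hcont continuous_snd

theorem Kset_smul {q : WeakDual ℝ X × ℝ} (hq : q ∈ Kset U) {c : ℝ} (hc : 0 ≤ c) :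
    c • q ∈ Kset U := by
  obtain ⟨a, ⟨l, hl, v, hv, rfl⟩, b, ⟨hb1, hb2⟩, rfl⟩ := hq
  refine ⟨(c * l) • v, ⟨c * l, mul_nonneg hc hl, v, hv, rfl⟩, c • b,
    ⟨by rw [Prod.smul_fst, hb1, smul_zero], by
      rw [Prod.smul_snd]; exact mul_nonneg hc hb2⟩, ?_⟩
  rw [smul_add, smul_smul]

instance : LocallyConvexSpace ℝ (WeakDual ℝ X) := WeakBilin.locallyConvexSpace

/-- The separation argument: if `K` is convex and closed then `M ⊆ K`. -/
theorem Mset_subset_Kset [Nonempty T] (hU : ∀ t, (U t).Nonempty)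
    (hF : {x : X | ∀ t, ∀ v ∈ U t, v.1 x ≤ v.2}.Nonempty)
    (hconv : Convex ℝ (Kset U)) (hclosed : IsClosed (Kset U)) : Mset U ⊆ Kset U := by
  intro p hp
  by_contra hpK
  obtain ⟨f, u, hfK, hfp⟩ := geometric_hahn_banach_closed_point hconv hclosed hpK
  obtain ⟨t₀⟩ := (inferInstance : Nonempty T)
  obtain ⟨v₀, hv₀⟩ := hU t₀
  have hv₀V : v₀ ∈ ⋃ t, U t := Set.mem_iUnion.2 ⟨t₀, hv₀⟩
  have h0K : (0 : WeakDual ℝ X × ℝ) ∈ Kset U :=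
    ⟨0, ⟨0, le_refl 0, v₀, hv₀V, (zero_smul ℝ v₀).symm⟩, 0, ⟨rfl, le_refl 0⟩, add_zero 0⟩
  have hu0 : 0 < u := by
    have := hfK 0 h0K
    rwa [map_zero] at this
  have hfK0 : ∀ q ∈ Kset U, f q ≤ 0 := by
    intro q hq
    by_contra h
    push_neg at h
    have hc : (0 : ℝ) ≤ u / f q + 1 := by positivity
    have := hfK ((u / f q + 1) • q) (Kset_smul U hq hc)
    rw [map_smul, smul_eq_mul, add_mul, div_mul_cancel₀ _ (ne_of_gt h), one_mul] at this
    linarith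
  -- decompose f
  obtain ⟨x₀, hx₀⟩ := weakdual_dual_eval (f.comp (ContinuousLinearMap.inl ℝ (WeakDual ℝ X) ℝ))
  set μ := f (0, 1) with hμ
  have hf_eq : ∀ q : WeakDual ℝ X × ℝ, f q = q.1 x₀ + μ * q.2 := by
    intro q
    have hq : ((q.1, (0 : ℝ)) : WeakDual ℝ X × ℝ) + q.2 • ((0 : WeakDual ℝ X), (1 : ℝ)) = q := by
      refine Prod.ext_iff.2 ⟨?_, ?_⟩
      · show q.1 + q.2 • (0 : WeakDual ℝ X) = q.1
        rw [smul_zero, add_zero]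
      · show (0 : ℝ) + q.2 • (1 : ℝ) = q.2
        rw [smul_eq_mul, mul_one, zero_add]
    have h1 : f (q.1, (0 : ℝ)) = q.1 x₀ := hx₀ q.1
    calc f q = f ((q.1, (0 : ℝ)) + q.2 • ((0 : WeakDual ℝ X), (1 : ℝ))) := by rw [hq]
      _ = f (q.1, (0 : ℝ)) + q.2 * f ((0 : WeakDual ℝ X), (1 : ℝ)) := by
          rw [map_add, map_smul, smul_eq_mul]
      _ = q.1 x₀ + μ * q.2 := by rw [h1, ← hμ]; ring
  have hμ0 : μ ≤ 0 := by
    apply hfK0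
    exact ⟨0, ⟨0, le_refl 0, v₀, hv₀V, (zero_smul ℝ v₀).symm⟩, (0, 1), ⟨rfl, zero_le_one⟩,
      zero_add _⟩
  have hVf : ∀ v ∈ ⋃ t, U t, v.1 x₀ + μ * v.2 ≤ 0 := by
    intro v hv
    rw [← hf_eq v]
    apply hfK0
    exact ⟨v, ⟨1, zero_le_one, v, hv, (one_smul ℝ v).symm⟩, 0, ⟨rfl, le_refl 0⟩, add_zero v⟩
  have hfp_pos : 0 < p.1 x₀ + μ * p.2 := by
    rw [← hf_eq p]; linarith
  rcases lt_or_eq_of_le hμ0 with hμneg | hμzero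
  · -- μ < 0
    have hmpos : (0:ℝ) < -μ := by linarith
    have hinv : (0:ℝ) < (-μ)⁻¹ := inv_pos.2 hmpos
    set x := (-μ)⁻¹ • x₀ with hx
    have hxF : ∀ t, ∀ v ∈ U t, v.1 x ≤ v.2 := by
      intro t v hvt
      have hv := hVf v (Set.mem_iUnion.2 ⟨t, hvt⟩)
      have h1 : v.1 x = (-μ)⁻¹ * v.1 x₀ := by rw [hx, map_smul, smul_eq_mul]
      have h2 : v.1 x₀ ≤ (-μ) * v.2 := by nlinarith
      rw [h1]
      calc (-μ)⁻¹ * v.1 x₀ ≤ (-μ)⁻¹ * ((-μ) * v.2) :=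
            mul_le_mul_of_nonneg_left h2 (le_of_lt hinv)
        _ = v.2 := by
            rw [← mul_assoc, inv_mul_cancel₀ (ne_of_gt hmpos), one_mul]
    have hpx := hp x hxF
    have h1 : p.1 x = (-μ)⁻¹ * p.1 x₀ := by rw [hx, map_smul, smul_eq_mul]
    rw [h1] at hpx
    have h2 : p.1 x₀ ≤ (-μ) * p.2 := by
      have h3 := mul_le_mul_of_nonneg_left hpx (le_of_lt hmpos)
      calc p.1 x₀ = (-μ) * ((-μ)⁻¹ * p.1 x₀) := by
            rw [← mul_assoc, mul_inv_cancel₀ (ne_of_gt hmpos), one_mul]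
        _ ≤ (-μ) * p.2 := h3
    nlinarith
  · -- μ = 0
    have hμz : μ = 0 := hμzero
    have hVneg : ∀ v ∈ ⋃ t, U t, v.1 x₀ ≤ 0 := by
      intro v hv
      have := hVf v hv
      rw [hμz] at this; linarith
    have hpx₀ : 0 < p.1 x₀ := by rw [hμz] at hfp_pos; linarith
    obtain ⟨x₁, hx₁⟩ := hF
    set n := max 0 ((p.2 - p.1 x₁ + 1) / p.1 x₀) with hn
    have hn0 : 0 ≤ n := le_max_left _ _
    have hxF : ∀ t, ∀ v ∈ U t, v.1 (x₁ + n • x₀) ≤ v.2 := by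
      intro t v hvt
      have h1 : v.1 (x₁ + n • x₀) = v.1 x₁ + n * v.1 x₀ := by
        rw [map_add, map_smul, smul_eq_mul]
      rw [h1]
      have := hVneg v (Set.mem_iUnion.2 ⟨t, hvt⟩)
      have := hx₁ t v hvt
      nlinarith
    have hpx := hp _ hxF
    have h1 : p.1 (x₁ + n • x₀) = p.1 x₁ + n * p.1 x₀ := by
      rw [map_add, map_smul, smul_eq_mul]
    rw [h1] at hpx
    have hnge : (p.2 - p.1 x₁ + 1) / p.1 x₀ ≤ n := le_max_right _ _
    have : p.2 - p.1 x₁ + 1 ≤ n * p.1 x₀ := by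
      rw [div_le_iff₀ hpx₀] at hnge
      linarith
    linarith

end Aux

/-- Corollary 5.1 (robust Farkas lemma for linear systems I): statement (i) — the
equivalence of (α) and (β) for all (c,s) with finite primal value — holds iff
(ii) cone 𝒱 + ℝ₊(0,1) is convex and closed. -/
theorem stmt19 [Nonempty T] (U : T → Set (WeakDual ℝ X × ℝ)) (hU : ∀ t, (U t).Nonempty)
    (hF : {x : X | ∀ t, ∀ v ∈ U t, v.1 x ≤ v.2}.Nonempty) :
    (∀ (c : WeakDual ℝ X) (s : ℝ), ⊥ < infRLIP U c →
      ((∀ x : X, (∀ v ∈ ⋃ t, U t, v.1 x ≤ v.2) → s ≤ c x) ↔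
        (∃ v ∈ ⋃ t, U t, ∃ l : ℝ, 0 ≤ l ∧ l • v.1 = -c ∧ l * v.2 ≤ -s))) ↔
    (Convex ℝ (coneSet (⋃ t, U t) + {p : WeakDual ℝ X × ℝ | p.1 = 0 ∧ 0 ≤ p.2}) ∧
      IsClosed (coneSet (⋃ t, U t) + {p : WeakDual ℝ X × ℝ | p.1 = 0 ∧ 0 ≤ p.2})) := by
  have hFV : ∀ x : X, (∀ t, ∀ v ∈ U t, v.1 x ≤ v.2) ↔ (∀ v ∈ ⋃ t, U t, v.1 x ≤ v.2) := by
    intro x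
    constructor
    · intro h v hv
      obtain ⟨t, hvt⟩ := Set.mem_iUnion.1 hv
      exact h t v hvt
    · intro h t v hvt
      exact h v (Set.mem_iUnion.2 ⟨t, hvt⟩)
  constructor
  · -- (i) → (ii): show K = M
    intro hi
    suffices hKM : Kset U = Mset U by
      rw [show (coneSet (⋃ t, U t) + {p : WeakDual ℝ X × ℝ | p.1 = 0 ∧ 0 ≤ p.2}) = Kset U
        from rfl, hKM]
      exact ⟨Mset_convex U, Mset_closed U⟩
    apply Set.Subset.antisymm (Kset_subset_Mset U)
    intro p hp
    -- apply (i) with c = -p.1, s = -p.2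
    have hα : ∀ x : X, (∀ v ∈ ⋃ t, U t, v.1 x ≤ v.2) → -p.2 ≤ (-p.1) x := by
      intro x hx
      have := hp x ((hFV x).2 hx)
      have hneg : (-p.1) x = -(p.1 x) := rfl
      rw [hneg]
      linarith
    have hinf : ⊥ < infRLIP U (-p.1) := by
      have hle : ((-p.2 : ℝ) : EReal) ≤ infRLIP U (-p.1) := by
        apply le_iInf
        rintro ⟨x, hx⟩
        exact_mod_cast EReal.coe_le_coe_iff.2 (hα x ((hFV x).1 hx))
      exact lt_of_lt_of_le (EReal.bot_lt_coe _) hle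
    obtain ⟨v, hv, l, hl0, hlv, hlr⟩ := (hi (-p.1) (-p.2) hinf).1 hα
    rw [neg_neg] at hlv hlr
    refine ⟨l • v, ⟨l, hl0, v, hv, rfl⟩, (0, p.2 - l * v.2), ⟨rfl, sub_nonneg.2 hlr⟩, ?_⟩
    refine Prod.ext_iff.2 ⟨?_, ?_⟩
    · show l • v.1 + 0 = p.1
      rw [add_zero, hlv]
    · show l * v.2 + (p.2 - l * v.2) = p.2
      ring
  · -- (ii) → (i)
    rintro ⟨hconv, hclosed⟩ c s _hinf
    constructor
    · intro hα
      have hpM : ((-c, -s) : WeakDual ℝ X × ℝ) ∈ Mset U := by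
        intro x hx
        have := hα x ((hFV x).1 hx)
        show (-c) x ≤ -s
        have hneg : (-c) x = -(c x) := rfl
        rw [hneg]
        linarith
      have hpK := Mset_subset_Kset U hU hF hconv hclosed hpM
      obtain ⟨a, ⟨l, hl, v, hv, rfl⟩, b, ⟨hb1, hb2⟩, hab⟩ := hpK
      refine ⟨v, hv, l, hl, ?_, ?_⟩
      · have h1 := congrArg Prod.fst hab
        simp only [Prod.fst_add, Prod.smul_fst, hb1, add_zero] at h1
        exact h1
      · have h2 := congrArg Prod.snd hab
        simp only [Prod.snd_add, Prod.smul_snd, smul_eq_mul] at h2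
        linarith
    · rintro ⟨v, hv, l, hl0, hlv, hlr⟩ x hx
      have hvx : v.1 x ≤ v.2 := hx v hv
      have h1 : (l • v.1) x = l * v.1 x := rfl
      have h2 : (l • v.1) x = -c x := by rw [hlv]; rfl
      have h3 : l * v.1 x ≤ l * v.2 := mul_le_mul_of_nonneg_left hvx hl0
      rw [h1] at h2
      linarith
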